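/- Let p ≥ 1 and n ≥ 1 be integers. If f ∈ S^p_{p−1}(n) and the function v ↦ v·f(v) also belongs to S^p_{p−1}(n), then f coincides on [0,1] with a single polynomial of degree at most p − 1; in particular, the real vector space of all such functions f has dimension at most p, independent of n. (This is the second claim in the proof of Theorem 5.2: when α^{(L)} and α^{(R)} are linearly independent linear polynomials, the transversal derivative data g₁ is locked to global polynomials of degree p − 1.) -/

import Mathlib

/-- `S^p_r(n)`: the space of functions `f : [0,1] → ℝ` that are `r` times continuously
differentiable on `[0,1]` and coincide, on each interval `[i/n, (i+1)/n]` for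
`i = 0,…,n−1`, with a polynomial of degree at most `p`. -/
def IsSpline (p r n : ℕ) (f : ℝ → ℝ) : Prop :=
  ContDiffOn ℝ r f (Set.Icc 0 1) ∧
  ∀ i : ℕ, i < n →
    ∃ q : Polynomial ℝ, q.natDegree ≤ p ∧
      ∀ x ∈ Set.Icc ((i : ℝ) / n) (((i : ℝ) + 1) / n), f x = q.eval x

open Polynomial Set

lemma glue (k : ℕ) : ∀ (g : ℝ → ℝ) (a t b : ℝ), a < t → t < b →
    ContDiffOn ℝ k g (Set.Icc a b) →
    ∀ (q q' : Polynomial ℝ), (∀ x ∈ Set.Icc a t, g x = q.eval x) →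
    (∀ x ∈ Set.Icc t b, g x = q'.eval x) →
    ∀ j ≤ k, (Polynomial.derivative^[j] q).eval t = (Polynomial.derivative^[j] q').eval t := by
  induction k with
  | zero =>
    intro g a t b hat htb hg q q' hq hq' j hj
    interval_cases j
    simpa using (hq t ⟨hat.le, le_refl t⟩).symm.trans (hq' t ⟨le_refl t, htb.le⟩)
  | succ k ih =>
    intro g a t b hat htb hg q q' hq hq' j hj
    match j with
    | 0 => simpa using (hq t ⟨hat.le, le_refl t⟩).symm.trans (hq' t ⟨le_refl t, htb.le⟩)
    | (j+1) =>
      have hab : a < b := hat.trans htb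
      have hud : UniqueDiffOn ℝ (Set.Icc a b) := uniqueDiffOn_Icc hab
      have hg' : ContDiffOn ℝ k (derivWithin g (Set.Icc a b)) (Set.Icc a b) :=
        hg.derivWithin hud (by exact_mod_cast le_refl (k+1))
      have hdiff : DifferentiableOn ℝ g (Set.Icc a b) :=
        hg.differentiableOn (by simp)
      have claim1 : ∀ x ∈ Set.Icc a t, derivWithin g (Set.Icc a b) x
          = (Polynomial.derivative q).eval x := by
        intro x hx
        have hx' : x ∈ Set.Icc a b := ⟨hx.1, hx.2.trans htb.le⟩
        have h1 : HasDerivWithinAt g (derivWithin g (Set.Icc a b) x) (Set.Icc a b) x :=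
          (hdiff x hx').hasDerivWithinAt
        have h2 := h1.mono (Set.Icc_subset_Icc le_rfl htb.le)
        have h3 : HasDerivWithinAt (fun y => q.eval y) (derivWithin g (Set.Icc a b) x)
            (Set.Icc a t) x := h2.congr (fun y hy => (hq y hy).symm) (hq x hx).symm
        have h4 : HasDerivWithinAt (fun y => q.eval y) ((Polynomial.derivative q).eval x)
            (Set.Icc a t) x := (q.hasDerivAt x).hasDerivWithinAt
        have hu : UniqueDiffWithinAt ℝ (Set.Icc a t) x := uniqueDiffOn_Icc hat x hx
        rw [← h3.derivWithin hu, h4.derivWithin hu]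
      have claim2 : ∀ x ∈ Set.Icc t b, derivWithin g (Set.Icc a b) x
          = (Polynomial.derivative q').eval x := by
        intro x hx
        have hx' : x ∈ Set.Icc a b := ⟨hat.le.trans hx.1, hx.2⟩
        have h1 : HasDerivWithinAt g (derivWithin g (Set.Icc a b) x) (Set.Icc a b) x :=
          (hdiff x hx').hasDerivWithinAt
        have h2 := h1.mono (Set.Icc_subset_Icc hat.le le_rfl)
        have h3 : HasDerivWithinAt (fun y => q'.eval y) (derivWithin g (Set.Icc a b) x)
            (Set.Icc t b) x := h2.congr (fun y hy => (hq' y hy).symm) (hq' x hx).symm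
        have h4 : HasDerivWithinAt (fun y => q'.eval y) ((Polynomial.derivative q').eval x)
            (Set.Icc t b) x := (q'.hasDerivAt x).hasDerivWithinAt
        have hu : UniqueDiffWithinAt ℝ (Set.Icc t b) x := uniqueDiffOn_Icc htb x hx
        rw [← h3.derivWithin hu, h4.derivWithin hu]
      have := ih (derivWithin g (Set.Icc a b)) a t b hat htb hg'
        (Polynomial.derivative q) (Polynomial.derivative q') claim1 claim2 j (by omega)
      simpa [Function.iterate_succ_apply] using this

lemma cover (n : ℕ) (hn : 1 ≤ n) (x : ℝ) (hx : x ∈ Set.Icc (0:ℝ) 1) :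
    ∃ i : ℕ, i < n ∧ x ∈ Set.Icc ((i : ℝ) / n) (((i : ℝ) + 1) / n) := by
  have hn0 : (0:ℝ) < n := by exact_mod_cast hn
  by_cases h1 : x = 1
  · refine ⟨n - 1, by omega, ?_, ?_⟩
    · rw [div_le_iff₀ hn0, h1, one_mul]
      have : ((n:ℝ) - 1 : ℝ) ≤ n := by linarith
      have hc : ((n - 1 : ℕ) : ℝ) = (n:ℝ) - 1 := by
        push_cast [Nat.cast_sub hn]; ring
      rw [hc]; linarith
    · rw [h1, le_div_iff₀ hn0, one_mul]
      have hc : ((n - 1 : ℕ) : ℝ) = (n:ℝ) - 1 := by push_cast [Nat.cast_sub hn]; ring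
      rw [hc]; linarith
  · have hx1 : x < 1 := lt_of_le_of_ne hx.2 h1
    have h0 : (0:ℝ) ≤ x * n := mul_nonneg hx.1 hn0.le
    set i := (⌊x * n⌋).toNat with hi
    have hfl : (⌊x * n⌋ : ℝ) = (i : ℝ) := by
      rw [hi]; exact_mod_cast (Int.toNat_of_nonneg (Int.floor_nonneg.mpr h0)).symm
    have hle : (i : ℝ) ≤ x * n := by rw [← hfl]; exact Int.floor_le _
    have hlt : x * n < (i : ℝ) + 1 := by rw [← hfl]; exact Int.lt_floor_add_one _
    have hin : i < n := by
      by_contra hc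
      push_neg at hc
      have : (n:ℝ) ≤ (i:ℝ) := by exact_mod_cast hc
      nlinarith
    exact ⟨i, hin, by rw [div_le_iff₀ hn0]; linarith, by rw [le_div_iff₀ hn0]; linarith⟩

lemma spline_global (p n : ℕ) (hp : 1 ≤ p) (hn : 1 ≤ n) (f : ℝ → ℝ)
    (hf : IsSpline p (p - 1) n f) (hvf : IsSpline p (p - 1) n (fun v => v * f v)) :
    ∃ q : Polynomial ℝ, q.natDegree ≤ p - 1 ∧
      ∀ x ∈ Set.Icc (0 : ℝ) 1, f x = q.eval x := by
  have hn0 : (0:ℝ) < n := by exact_mod_cast hn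
  choose q hqdeg hqeq using hf.2
  choose r hrdeg hreq using hvf.2
  -- r i = X * q i
  have hXq : ∀ i (h : i < n), r i h = X * q i h := by
    intro i h
    apply Polynomial.eq_of_infinite_eval_eq
    have hinf : (Set.Icc ((i:ℝ)/n) (((i:ℝ)+1)/n)).Infinite := by
      refine Set.Icc_infinite ?_
      rw [div_lt_div_iff₀ hn0 hn0]
      exact mul_lt_mul_of_pos_right (by linarith) hn0
    apply hinf.mono
    intro x hx
    have h1 := hreq i h x hx
    have h2 := hqeq i h x hx
    simp only [Set.mem_setOf_eq, eval_mul, eval_X]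
    rw [← h1, ← h2]
  -- adjacent pieces agree
  have hadj : ∀ i (h : i + 1 < n), q i (by omega) = q (i+1) h := by
    intro i h
    set a : ℝ := (i:ℝ)/n
    set t : ℝ := ((i:ℝ)+1)/n
    set b : ℝ := ((i:ℝ)+2)/n
    have hat : a < t := by
      rw [div_lt_div_iff₀ hn0 hn0]
      exact mul_lt_mul_of_pos_right (by linarith) hn0
    have htb : t < b := by
      rw [div_lt_div_iff₀ hn0 hn0]
      exact mul_lt_mul_of_pos_right (by linarith) hn0
    have hsub : Set.Icc a b ⊆ Set.Icc 0 1 := by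
      apply Set.Icc_subset_Icc
      · positivity
      · rw [div_le_one hn0]
        have : (i:ℝ) + 2 ≤ n := by exact_mod_cast h
        linarith
    have hder := glue (p-1) f a t b hat htb (hf.1.mono hsub) (q i (by omega)) (q (i+1) h)
      (hqeq i (by omega))
      (by
        have : (((i:ℝ)+1)) = ((i+1 : ℕ) : ℝ) := by push_cast; ring
        intro x hx
        apply hqeq (i+1) h
        constructor
        · convert hx.1 using 2; push_cast; ring
        · convert hx.2 using 2; push_cast; ring)
    set d : Polynomial ℝ := q (i+1) h - q i (by omega) with hd
    by_contra hne
    have hdne : d ≠ 0 := sub_ne_zero.mpr (Ne.symm hne)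
    have hroots : ∀ m ≤ p - 1, (Polynomial.derivative^[m] d).IsRoot t := by
      intro m hm
      have heq := hder m hm
      show eval t (Polynomial.derivative^[m] d) = 0
      rw [hd, Polynomial.iterate_derivative_sub, eval_sub, ← heq, sub_self]
    have hmult : p - 1 < d.rootMultiplicity t :=
      (Polynomial.lt_rootMultiplicity_iff_isRoot_iterate_derivative hdne).mpr hroots
    have hdvd : (X - C t) ^ p ∣ d := by
      have h1 := Polynomial.pow_rootMultiplicity_dvd d t
      exact dvd_trans (pow_dvd_pow _ (by omega)) h1
    have hdegd : p ≤ d.natDegree := by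
      have := Polynomial.natDegree_le_of_dvd hdvd hdne
      simpa [Polynomial.natDegree_pow, Polynomial.natDegree_X_sub_C] using this
    -- but X * d has degree ≤ p
    have hXd : X * d = r (i+1) h - r i (by omega) := by
      rw [hXq (i+1) h, hXq i (by omega), hd]; ring
    have hdeg1 : (X * d).natDegree ≤ p := by
      rw [hXd]
      exact le_trans (Polynomial.natDegree_sub_le _ _) (by
        simp [hrdeg (i+1) h, hrdeg i (show i < n by omega)])
    have : (X * d).natDegree = 1 + d.natDegree := by
      rw [Polynomial.natDegree_mul Polynomial.X_ne_zero hdne, Polynomial.natDegree_X]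
    omega
  -- all pieces equal the first
  have hall : ∀ i (h : i < n), q i h = q 0 hn := by
    intro i
    induction i with
    | zero => intro h; rfl
    | succ i ih => intro h; rw [← hadj i h]; exact ih (by omega)
  refine ⟨q 0 hn, ?_, ?_⟩
  · -- degree bound
    by_cases h0 : q 0 hn = 0
    · simp [h0]
    · have : (X * q 0 hn).natDegree ≤ p := by rw [← hXq 0 hn]; exact hrdeg 0 hn
      rw [Polynomial.natDegree_mul Polynomial.X_ne_zero h0, Polynomial.natDegree_X] at this
      omega
  · intro x hx
    obtain ⟨i, hin, hxi⟩ := cover n hn x hx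
    rw [hqeq i hin x hxi, hall i hin]

/-- Second claim in the proof of Theorem 5.2: if `f ∈ S^p_{p−1}(n)` and
`v ↦ v·f(v) ∈ S^p_{p−1}(n)`, then `f` is a single global polynomial of degree at most
`p−1`; in particular the space of all such `f`, viewed as functions on `[0,1]`, has
dimension at most `p`, independently of `n`. -/
theorem stmt15 (p n : ℕ) (hp : 1 ≤ p) (hn : 1 ≤ n) :
    (∀ f : ℝ → ℝ, IsSpline p (p - 1) n f →
      IsSpline p (p - 1) n (fun v => v * f v) →
      ∃ q : Polynomial ℝ, q.natDegree ≤ p - 1 ∧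
        ∀ x ∈ Set.Icc (0 : ℝ) 1, f x = q.eval x) ∧
    Module.rank ℝ
      ↥(Submodule.span ℝ
        {g : ↥(Set.Icc (0 : ℝ) 1) → ℝ |
          ∃ f : ℝ → ℝ,
            (∀ x : ↥(Set.Icc (0 : ℝ) 1), g x = f (x : ℝ)) ∧
            IsSpline p (p - 1) n f ∧
            IsSpline p (p - 1) n (fun v => v * f v)}) ≤ (p : Cardinal) := by
  refine ⟨fun f hf hvf => spline_global p n hp hn f hf hvf, ?_⟩
  set L : Polynomial ℝ →ₗ[ℝ] (↥(Set.Icc (0:ℝ) 1) → ℝ) :=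
    { toFun := fun q x => q.eval ↑x
      map_add' := by intros; funext x; simp
      map_smul' := by intros; funext x; simp } with hL
  have hle : Submodule.span ℝ
      {g : ↥(Set.Icc (0 : ℝ) 1) → ℝ |
        ∃ f : ℝ → ℝ,
          (∀ x : ↥(Set.Icc (0 : ℝ) 1), g x = f (x : ℝ)) ∧
          IsSpline p (p - 1) n f ∧
          IsSpline p (p - 1) n (fun v => v * f v)} ≤ (Polynomial.degreeLT ℝ p).map L := by
    rw [Submodule.span_le]
    rintro g ⟨f, hgf, hf, hvf⟩
    obtain ⟨q, hq, heq⟩ := spline_global p n hp hn f hf hvf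
    refine ⟨q, ?_, ?_⟩
    · rw [SetLike.mem_coe, Polynomial.mem_degreeLT]
      refine lt_of_le_of_lt Polynomial.degree_le_natDegree ?_
      exact_mod_cast (show q.natDegree < p by omega)
    · funext x
      exact ((hgf x).trans (heq x x.2)).symm
  refine le_trans (Submodule.rank_mono hle) ?_
  refine le_trans (rank_map_le L _) ?_
  rw [LinearEquiv.rank_eq (Polynomial.degreeLTEquiv ℝ p), rank_fin_fun]
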